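/- Let A be an N×N primitive nonnegative matrix with Perron–Frobenius eigenvalue λ and Perron–Frobenius left eigenvector u normalized to lie on the unit simplex. Set f(i) = Σⱼ A(i,j) and M(i,j) = A(i,j)/f(i). Let (X_n)_{n≥0} be a Markov chain with transition matrix M started at a fixed state k, and let τ_k = inf{n ≥ 1 : X_n = k}. Then u_k = 1 / E_k[ Σ_{n=0}^{τ_k−1} λ^{−n} Π_{t=0}^{n−1} f(X_t) ]. -/

import Mathlib

open Finset Filter MeasureTheory

namespace PFAux


variable {N : ℕ}

/-- iterated left multiplication: `vecIter C v n j = (vᵀ C^n)_j`. -/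
def vecIter (C : Matrix (Fin N) (Fin N) ℝ) (v : Fin N → ℝ) : ℕ → Fin N → ℝ
  | 0 => v
  | n+1 => fun j => ∑ i, vecIter C v n i * C i j

lemma vecIter_eq_pow (C : Matrix (Fin N) (Fin N) ℝ) (v : Fin N → ℝ) (n : ℕ) (j : Fin N) :
    vecIter C v n j = ∑ i, v i * (C ^ n) i j := by
  induction n generalizing j with
  | zero => simp [vecIter, Matrix.one_apply]
  | succ n ih =>
    simp only [vecIter, ih, pow_succ, Matrix.mul_apply, Finset.sum_mul, Finset.mul_sum,
      mul_assoc]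
    exact Finset.sum_comm

lemma vecIter_nonneg {C : Matrix (Fin N) (Fin N) ℝ} {v : Fin N → ℝ}
    (hC : ∀ i j, 0 ≤ C i j) (hv : ∀ i, 0 ≤ v i) (n : ℕ) (j : Fin N) :
    0 ≤ vecIter C v n j := by
  induction n generalizing j with
  | zero => exact hv j
  | succ n ih => exact Finset.sum_nonneg fun i _ => mul_nonneg (ih i) (hC i j)

lemma vecIter_succ_left (C : Matrix (Fin N) (Fin N) ℝ) (v : Fin N → ℝ) (n : ℕ) :
    vecIter C v (n+1) = vecIter C (fun j => ∑ i, v i * C i j) n := by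
  induction n with
  | zero => rfl
  | succ n ih =>
    funext j
    show (∑ i, vecIter C v (n+1) i * C i j) = _
    rw [ih]
    rfl

lemma pathSum (C : Matrix (Fin N) (Fin N) ℝ) :
    ∀ (n : ℕ) (v : Fin N → ℝ),
    ∑ p : Fin (n+1) → Fin N, v (p 0) * ∏ t : Fin n, C (p t.castSucc) (p t.succ)
      = ∑ j, vecIter C v n j := by
  intro n
  induction n with
  | zero =>
    intro v
    simp only [Finset.univ_unique, Fin.prod_univ_zero, mul_one, vecIter]
    exact Fintype.sum_equiv (Equiv.funUnique (Fin 1) (Fin N)) _ _ (fun x => rfl)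
  | succ n ih =>
    intro v
    rw [← (Fin.consEquiv (fun _ : Fin (n+2) => Fin N)).sum_comp]
    rw [Fintype.sum_prod_type]
    have key : ∀ (a : Fin N) (q : Fin (n+1) → Fin N),
        v ((Fin.consEquiv (fun _ : Fin (n+2) => Fin N)) (a, q) 0) *
          ∏ t : Fin (n+1), C ((Fin.consEquiv (fun _ : Fin (n+2) => Fin N)) (a, q) t.castSucc)
            ((Fin.consEquiv (fun _ : Fin (n+2) => Fin N)) (a, q) t.succ)
          = (v a * C a (q 0)) * ∏ t : Fin n, C (q t.castSucc) (q t.succ) := by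
      intro a q
      simp only [Fin.consEquiv_apply]
      rw [Fin.prod_univ_succ]
      have h3 : ∀ t : Fin n,
          C ((Fin.cons a q : ∀ _ : Fin (n+2), Fin N) (t.succ).castSucc)
            ((Fin.cons a q : ∀ _ : Fin (n+2), Fin N) (t.succ).succ)
          = C (q t.castSucc) (q t.succ) := by
        intro t
        rw [← Fin.succ_castSucc]
        simp
      rw [Finset.prod_congr rfl (fun t _ => h3 t)]
      show v a * (C a (q 0) * _) = _
      ring
    simp only [key]
    have swap : ∀ a : Fin N, ∑ q : Fin (n+1) → Fin N,
        (v a * C a (q 0)) * ∏ t : Fin n, C (q t.castSucc) (q t.succ)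
        = ∑ q : Fin (n+1) → Fin N,
        (v a * C a (q 0)) * ∏ t : Fin n, C (q t.castSucc) (q t.succ) := fun _ => rfl
    rw [Finset.sum_comm]
    have : ∀ q : Fin (n+1) → Fin N,
        (∑ a, (v a * C a (q 0)) * ∏ t : Fin n, C (q t.castSucc) (q t.succ))
        = (∑ a, v a * C a (q 0)) * ∏ t : Fin n, C (q t.castSucc) (q t.succ) := by
      intro q; rw [Finset.sum_mul]
    simp only [this]
    rw [ih (fun j => ∑ a, v a * C a j)]
    rw [vecIter_succ_left]

def tab (A : Matrix (Fin N) (Fin N) ℝ) (k : Fin N) : Matrix (Fin N) (Fin N) ℝ :=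
  Matrix.of fun i j => if j = k then 0 else A i j

def eVec (k : Fin N) : Fin N → ℝ := fun i => if i = k then 1 else 0

lemma key_hasSum (A : Matrix (Fin N) (Fin N) ℝ)
    (hA_nonneg : ∀ i j, 0 ≤ A i j)
    (hA_prim : ∃ m : ℕ, 0 < m ∧ ∀ i j, 0 < (A ^ m) i j)
    (lam : ℝ) (u : Fin N → ℝ)
    (hlam_pos : 0 < lam) (hu_pos : ∀ i, 0 < u i) (hu_sum : ∑ i, u i = 1)
    (hu_eig : ∀ j, ∑ i, u i * A i j = lam * u j) (k : Fin N) :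
    HasSum (fun n => lam⁻¹ ^ n * ∑ j, vecIter (tab A k) (eVec k) n j) (1 / u k) := by
  set B := tab A k with hBdef
  have hBapp : ∀ i j, B i j = if j = k then 0 else A i j := fun i j => rfl
  have hBnn : ∀ i j, 0 ≤ B i j := by
    intro i j; rw [hBapp]; split
    · exact le_refl 0
    · exact hA_nonneg i j
  have hBle : ∀ i j, B i j ≤ A i j := by
    intro i j; rw [hBapp]; split
    · exact hA_nonneg i j
    · exact le_refl _
  have huB : ∀ j, (∑ i, u i * B i j) = if j = k then 0 else lam * u j := by
    intro j
    by_cases h : j = k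
    · simp [hBapp, h]
    · simp only [hBapp, if_neg h]
      exact hu_eig j
  -- the sequence z n j = lam⁻¹^n (uᵀ B^n)_j
  set z : ℕ → Fin N → ℝ := fun n j => lam⁻¹ ^ n * vecIter B u n j with hzdef
  have hlaminv : (0:ℝ) < lam⁻¹ := inv_pos.mpr hlam_pos
  have hz0 : ∀ j, z 0 j = u j := by intro j; simp [hzdef, vecIter]
  have hzrec : ∀ n j, z (n+1) j = lam⁻¹ * ∑ i, z n i * B i j := by
    intro n j
    show lam⁻¹ ^ (n+1) * (∑ i, vecIter B u n i * B i j) = _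
    rw [Finset.mul_sum, Finset.mul_sum]
    apply Finset.sum_congr rfl
    intro i _
    show lam⁻¹ ^ (n+1) * (vecIter B u n i * B i j)
      = lam⁻¹ * (lam⁻¹ ^ n * vecIter B u n i * B i j)
    ring
  have hznn : ∀ n j, 0 ≤ z n j := by
    intro n j
    exact mul_nonneg (pow_nonneg hlaminv.le n)
      (vecIter_nonneg hBnn (fun i => (hu_pos i).le) n j)
  have hz1 : ∀ j, z 1 j = if j = k then 0 else u j := by
    intro j
    rw [hzrec]
    have : ∀ i, z 0 i = u i := hz0
    rw [Finset.sum_congr rfl (fun i _ => by rw [hz0]), huB]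
    by_cases h : j = k
    · simp [h]
    · rw [if_neg h, if_neg h, ← mul_assoc, inv_mul_cancel₀ hlam_pos.ne', one_mul]
  have hzanti : ∀ n j, z (n+1) j ≤ z n j := by
    intro n
    induction n with
    | zero =>
      intro j
      rw [hz1, hz0]
      split
      · exact (hu_pos j).le
      · exact le_refl _
    | succ n ih =>
      intro j
      rw [hzrec, hzrec]
      apply mul_le_mul_of_nonneg_left _ hlaminv.le
      apply Finset.sum_le_sum
      intro i _
      exact mul_le_mul_of_nonneg_right (ih i) (hBnn i j)
  have hzleu : ∀ n j, z n j ≤ u j := by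
    intro n
    induction n with
    | zero => intro j; rw [hz0]
    | succ n ih => intro j; exact le_trans (hzanti n j) (ih j)
  -- telescoping identity
  have htel : ∀ n j, u k * (lam⁻¹ ^ n * vecIter B (eVec k) n j) = z n j - z (n+1) j := by
    intro n
    induction n with
    | zero =>
      intro j
      rw [hz0, hz1]
      show u k * (1 * eVec k j) = _
      by_cases h : j = k
      · simp [eVec, h]
      · simp [eVec, h]
    | succ n ih =>
      intro j
      have step : u k * (lam⁻¹ ^ (n+1) * vecIter B (eVec k) (n+1) j)
          = lam⁻¹ * ∑ i, (u k * (lam⁻¹ ^ n * vecIter B (eVec k) n i)) * B i j := by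
        show u k * (lam⁻¹ ^ (n+1) * ∑ i, vecIter B (eVec k) n i * B i j) = _
        rw [Finset.mul_sum, Finset.mul_sum, Finset.mul_sum]
        apply Finset.sum_congr rfl
        intro i _
        ring
      rw [step]
      rw [Finset.sum_congr rfl (fun i _ => by rw [ih i])]
      rw [hzrec, hzrec]
      rw [Finset.sum_congr rfl (fun i (_ : i ∈ univ) => sub_mul (z n i) (z (n+1) i) (B i j))]
      rw [Finset.sum_sub_distrib, mul_sub]
  have hukne : u k ≠ 0 := (hu_pos k).ne'
  -- partial sums
  have hpart : ∀ m, ∑ n ∈ Finset.range m, (lam⁻¹ ^ n * ∑ j, vecIter B (eVec k) n j)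
      = (1 - ∑ j, z m j) / u k := by
    intro m
    rw [eq_div_iff hukne]
    have : (∑ n ∈ Finset.range m, (lam⁻¹ ^ n * ∑ j, vecIter B (eVec k) n j)) * u k
        = ∑ n ∈ Finset.range m, ∑ j, (u k * (lam⁻¹ ^ n * vecIter B (eVec k) n j)) := by
      rw [Finset.sum_mul]
      apply Finset.sum_congr rfl
      intro n _
      rw [Finset.mul_sum, Finset.sum_mul]
      apply Finset.sum_congr rfl
      intro j _
      ring
    rw [this]
    rw [Finset.sum_congr rfl (fun n (_ : n ∈ Finset.range m) =>
      Finset.sum_congr rfl (fun j (_ : j ∈ univ) => htel n j))]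
    rw [Finset.sum_comm]
    rw [Finset.sum_congr rfl (fun j (_ : j ∈ univ) => Finset.sum_range_sub' (fun n => z n j) m)]
    rw [Finset.sum_sub_distrib]
    rw [Finset.sum_congr rfl (fun j (_ : j ∈ univ) => hz0 j), hu_sum]
  -- the decreasing limit w
  set w : Fin N → ℝ := fun j => ⨅ n, z n j with hwdef
  have hbdd : ∀ j, BddBelow (Set.range fun n => z n j) := by
    intro j
    exact ⟨0, fun x ⟨n, hn⟩ => hn ▸ hznn n j⟩
  have hw_tend : ∀ j, Tendsto (fun n => z n j) atTop (nhds (w j)) := by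
    intro j
    exact tendsto_atTop_ciInf (antitone_nat_of_succ_le fun n => hzanti n j) (hbdd j)
  have hw_nn : ∀ j, 0 ≤ w j := fun j => le_ciInf fun n => hznn n j
  have hw_le_u : ∀ j, w j ≤ u j := by
    intro j
    have := ciInf_le (hbdd j) 0
    rw [hz0] at this
    exact this
  have hwfix : ∀ j, lam * w j = ∑ i, w i * B i j := by
    intro j
    have h1 : Tendsto (fun n => z (n+1) j) atTop (nhds (w j)) :=
      (hw_tend j).comp (tendsto_add_atTop_nat 1)
    have h2 : Tendsto (fun n => lam⁻¹ * ∑ i, z n i * B i j) atTop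
        (nhds (lam⁻¹ * ∑ i, w i * B i j)) := by
      apply Tendsto.const_mul
      exact tendsto_finset_sum _ (fun i _ => (hw_tend i).mul_const _)
    have h3 : w j = lam⁻¹ * ∑ i, w i * B i j := by
      apply tendsto_nhds_unique h1
      exact h2.congr (fun n => (hzrec n j).symm)
    rw [h3, ← mul_assoc, mul_inv_cancel₀ hlam_pos.ne', one_mul]
  have hwiter : ∀ n j, vecIter B w n j = lam ^ n * w j := by
    intro n
    induction n with
    | zero => intro j; simp [vecIter]
    | succ n ih =>
      intro j
      show (∑ i, vecIter B w n i * B i j) = _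
      rw [Finset.sum_congr rfl (fun i (_ : i ∈ univ) => by rw [ih i])]
      have : (∑ i, lam ^ n * w i * B i j) = lam ^ n * ∑ i, w i * B i j := by
        rw [Finset.mul_sum]
        exact Finset.sum_congr rfl (fun i _ => by ring)
      rw [this, ← hwfix, pow_succ]
      ring
  -- matrix power facts
  have hApnn : ∀ n i j, 0 ≤ (A ^ n) i j := by
    intro n
    induction n with
    | zero => intro i j; rw [pow_zero, Matrix.one_apply]; split <;> norm_num
    | succ n ih =>
      intro i j
      rw [pow_succ, Matrix.mul_apply]
      exact Finset.sum_nonneg fun l _ => mul_nonneg (ih i l) (hA_nonneg l j)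
  have hBpnn : ∀ n i j, 0 ≤ (B ^ n) i j := by
    intro n
    induction n with
    | zero => intro i j; rw [pow_zero, Matrix.one_apply]; split <;> norm_num
    | succ n ih =>
      intro i j
      rw [pow_succ, Matrix.mul_apply]
      exact Finset.sum_nonneg fun l _ => mul_nonneg (ih i l) (hBnn l j)
  have hBAle : ∀ n i j, (B ^ n) i j ≤ (A ^ n) i j := by
    intro n
    induction n with
    | zero => intro i j; rw [pow_zero, pow_zero]
    | succ n ih =>
      intro i j
      rw [pow_succ, pow_succ, Matrix.mul_apply, Matrix.mul_apply]
      apply Finset.sum_le_sum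
      intro l _
      exact mul_le_mul (ih i l) (hBle l j) (hBnn l j) (hApnn n i l)
  have hBcol : ∀ n i, (B ^ (n+1)) i k = 0 := by
    intro n i
    rw [pow_succ, Matrix.mul_apply]
    apply Finset.sum_eq_zero
    intro l _
    rw [hBapp, if_pos rfl, mul_zero]
  have huApow : ∀ n j, ∑ i, u i * (A ^ n) i j = lam ^ n * u j := by
    intro n
    induction n with
    | zero => intro j; simp [Matrix.one_apply]
    | succ n ih =>
      intro j
      rw [pow_succ]
      have : ∀ i, u i * (A ^ n * A) i j = ∑ l, u i * ((A ^ n) i l * A l j) := by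
        intro i
        rw [Matrix.mul_apply, Finset.mul_sum]
      rw [Finset.sum_congr rfl (fun i (_ : i ∈ univ) => this i), Finset.sum_comm]
      have : ∀ l, (∑ i, u i * ((A ^ n) i l * A l j)) = (∑ i, u i * (A ^ n) i l) * A l j := by
        intro l
        rw [Finset.sum_mul]
        exact Finset.sum_congr rfl (fun i _ => by ring)
      rw [Finset.sum_congr rfl (fun l (_ : l ∈ univ) => this l)]
      rw [Finset.sum_congr rfl (fun l (_ : l ∈ univ) => by rw [ih l])]
      have : (∑ l, lam ^ n * u l * A l j) = lam ^ n * ∑ l, u l * A l j := by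
        rw [Finset.mul_sum]
        exact Finset.sum_congr rfl (fun l _ => by ring)
      rw [this, hu_eig, pow_succ]
      ring
  -- w = 0
  have hw0 : ∀ j, w j = 0 := by
    obtain ⟨j₀, -, hj₀⟩ := Finset.exists_max_image univ (fun j => w j / u j) ⟨k, mem_univ k⟩
    set θ := w j₀ / u j₀ with hθdef
    have hwθ : ∀ j, w j ≤ θ * u j := by
      intro j
      have h := hj₀ j (mem_univ j)
      calc w j = w j / u j * u j := by rw [div_mul_cancel₀ _ (hu_pos j).ne']
        _ ≤ θ * u j := mul_le_mul_of_nonneg_right h (hu_pos j).le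
    have hwj₀ : w j₀ = θ * u j₀ := by
      rw [hθdef, div_mul_cancel₀ _ (hu_pos j₀).ne']
    rcases le_or_gt θ 0 with hθ0 | hθ0
    · intro j
      exact le_antisymm (le_trans (hwθ j) (mul_nonpos_of_nonpos_of_nonneg hθ0 (hu_pos j).le))
        (hw_nn j)
    · exfalso
      obtain ⟨m, hm, hAm⟩ := hA_prim
      have hwj₀pos : 0 < w j₀ := by rw [hwj₀]; exact mul_pos hθ0 (hu_pos j₀)
      -- key inequality
      have hkey : ∀ i, (B ^ (2*m)) i j₀ + (A ^ m) i k * (A ^ m) k j₀ ≤ (A ^ (2*m)) i j₀ := by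
        intro i
        have h2m : 2 * m = m + m := by ring
        rw [h2m, pow_add, pow_add, Matrix.mul_apply, Matrix.mul_apply]
        have hBik : (B ^ m) i k = 0 := by
          obtain ⟨m', rfl⟩ := Nat.exists_eq_succ_of_ne_zero hm.ne'
          exact hBcol m' i
        have hterm : ∀ l, (B ^ m) i l * (B ^ m) l j₀ +
            (if l = k then (A ^ m) i k * (A ^ m) k j₀ else 0)
            ≤ (A ^ m) i l * (A ^ m) l j₀ := by
          intro l
          by_cases h : l = k
          · subst h
            rw [hBik, zero_mul, zero_add, if_pos rfl]
          · rw [if_neg h, add_zero]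
            exact mul_le_mul (hBAle m i l) (hBAle m l j₀) (hBpnn m l j₀) (hApnn m i l)
        calc (∑ l, (B ^ m) i l * (B ^ m) l j₀) + (A ^ m) i k * (A ^ m) k j₀
            = ∑ l, ((B ^ m) i l * (B ^ m) l j₀ +
                (if l = k then (A ^ m) i k * (A ^ m) k j₀ else 0)) := by
              rw [Finset.sum_add_distrib, Finset.sum_ite_eq' univ k
                (fun _ => (A ^ m) i k * (A ^ m) k j₀), if_pos (mem_univ k)]
          _ ≤ ∑ l, (A ^ m) i l * (A ^ m) l j₀ := Finset.sum_le_sum (fun l _ => hterm l)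
      have c1 : lam ^ (2*m) * w j₀ = ∑ i, w i * (B ^ (2*m)) i j₀ := by
        rw [← hwiter (2*m) j₀, vecIter_eq_pow]
      have c2 : (∑ i, w i * (B ^ (2*m)) i j₀)
          ≤ (∑ i, w i * (A ^ (2*m)) i j₀) - (∑ i, w i * (A ^ m) i k) * (A ^ m) k j₀ := by
        have step : ∀ i, w i * (B ^ (2*m)) i j₀
            ≤ w i * (A ^ (2*m)) i j₀ - w i * ((A ^ m) i k * (A ^ m) k j₀) := by
          intro i
          have := mul_le_mul_of_nonneg_left (hkey i) (hw_nn i)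
          rw [mul_add] at this
          linarith
        calc (∑ i, w i * (B ^ (2*m)) i j₀)
            ≤ ∑ i, (w i * (A ^ (2*m)) i j₀ - w i * ((A ^ m) i k * (A ^ m) k j₀)) :=
              Finset.sum_le_sum (fun i _ => step i)
          _ = (∑ i, w i * (A ^ (2*m)) i j₀) - (∑ i, w i * (A ^ m) i k) * (A ^ m) k j₀ := by
              rw [Finset.sum_sub_distrib, Finset.sum_mul]
              congr 1
              exact Finset.sum_congr rfl (fun i _ => by ring)
      have c3 : (∑ i, w i * (A ^ (2*m)) i j₀) ≤ lam ^ (2*m) * w j₀ := by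
        calc (∑ i, w i * (A ^ (2*m)) i j₀) ≤ ∑ i, θ * u i * (A ^ (2*m)) i j₀ :=
              Finset.sum_le_sum (fun i _ =>
                mul_le_mul_of_nonneg_right (hwθ i) (hApnn (2*m) i j₀))
          _ = θ * ∑ i, u i * (A ^ (2*m)) i j₀ := by
              rw [Finset.mul_sum]
              exact Finset.sum_congr rfl (fun i _ => by ring)
          _ = θ * (lam ^ (2*m) * u j₀) := by rw [huApow]
          _ = lam ^ (2*m) * w j₀ := by rw [hwj₀]; ring
      have c5 : 0 < (∑ i, w i * (A ^ m) i k) * (A ^ m) k j₀ := by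
        apply mul_pos _ (hAm k j₀)
        have hsingle : w j₀ * (A ^ m) j₀ k ≤ ∑ i, w i * (A ^ m) i k :=
          Finset.single_le_sum (fun i _ => mul_nonneg (hw_nn i) (hApnn m i k)) (mem_univ j₀)
        exact lt_of_lt_of_le (mul_pos hwj₀pos (hAm j₀ k)) hsingle
      linarith
  -- conclude
  have hR : Tendsto (fun m => ∑ j, z m j) atTop (nhds 0) := by
    have : Tendsto (fun m => ∑ j, z m j) atTop (nhds (∑ j, w j)) :=
      tendsto_finset_sum _ (fun j _ => hw_tend j)
    rwa [Finset.sum_congr rfl (fun j (_ : j ∈ univ) => hw0 j), Finset.sum_const,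
      smul_zero] at this
  rw [hasSum_iff_tendsto_nat_of_nonneg]
  · apply Tendsto.congr (fun m => (hpart m).symm)
    have : Tendsto (fun m => (1 - ∑ j, z m j) / u k) atTop (nhds ((1 - 0) / u k)) :=
      (tendsto_const_nhds.sub hR).div_const _
    simpa using this
  · intro n
    exact mul_nonneg (pow_nonneg hlaminv.le n)
      (Finset.sum_nonneg fun j _ => vecIter_nonneg hBnn
        (fun i => by unfold eVec; split <;> norm_num) n j)



variable {N : ℕ}

lemma cylinder_decomp {Ω : Type*} (X : ℕ → Ω → Fin N) (n : ℕ)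
    (Ψ : (Fin (n+1) → Fin N) → ℝ) (ω : Ω) :
    Ψ (fun t => X t.val ω)
      = ∑ p : Fin (n+1) → Fin N,
          Set.indicator {ω' | ∀ t : Fin (n+1), X t.val ω' = p t} (fun _ => Ψ p) ω := by
  rw [Finset.sum_eq_single (fun t : Fin (n+1) => X t.val ω)]
  · rw [Set.indicator_of_mem]
    exact fun t => rfl
  · intro p _ hp
    rw [Set.indicator_of_notMem]
    intro h
    exact hp (funext fun t => (h t).symm)
  · intro h
    exact absurd (Finset.mem_univ _) h

lemma cyl_measurable {Ω : Type*} [MeasurableSpace Ω] (X : ℕ → Ω → Fin N)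
    (hX : ∀ n, Measurable (X n)) (n : ℕ) (p : Fin (n+1) → Fin N) :
    MeasurableSet {ω' | ∀ t : Fin (n+1), X t.val ω' = p t} := by
  have : {ω' | ∀ t : Fin (n+1), X t.val ω' = p t}
      = ⋂ t : Fin (n+1), (X t.val) ⁻¹' {p t} := by
    ext ω; simp [Set.mem_iInter]
  rw [this]
  exact MeasurableSet.iInter fun t => (hX t.val) (measurableSet_singleton _)

lemma integrable_cylinderFun {Ω : Type*} [MeasurableSpace Ω] (P : Measure Ω)
    [IsProbabilityMeasure P] (X : ℕ → Ω → Fin N) (hX : ∀ n, Measurable (X n)) (n : ℕ)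
    (Ψ : (Fin (n+1) → Fin N) → ℝ) :
    Integrable (fun ω => Ψ (fun t => X t.val ω)) P := by
  have : (fun ω => Ψ (fun t => X t.val ω)) = fun ω => ∑ p : Fin (n+1) → Fin N,
      Set.indicator {ω' | ∀ t : Fin (n+1), X t.val ω' = p t} (fun _ => Ψ p) ω :=
    funext fun ω => cylinder_decomp X n Ψ ω
  rw [this]
  apply integrable_finset_sum
  intro p _
  exact (integrable_const (Ψ p)).indicator (cyl_measurable X hX n p)

lemma integral_cylinderFun {Ω : Type*} [MeasurableSpace Ω] (P : Measure Ω)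
    [IsProbabilityMeasure P] (X : ℕ → Ω → Fin N) (hX : ∀ n, Measurable (X n)) (n : ℕ)
    (Ψ : (Fin (n+1) → Fin N) → ℝ) :
    ∫ ω, Ψ (fun t => X t.val ω) ∂P
      = ∑ p : Fin (n+1) → Fin N,
          Ψ p * (P {ω' | ∀ t : Fin (n+1), X t.val ω' = p t}).toReal := by
  have heq : (fun ω => Ψ (fun t => X t.val ω)) = fun ω => ∑ p : Fin (n+1) → Fin N,
      Set.indicator {ω' | ∀ t : Fin (n+1), X t.val ω' = p t} (fun _ => Ψ p) ω :=
    funext fun ω => cylinder_decomp X n Ψ ω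
  rw [heq, integral_finset_sum]
  · apply Finset.sum_congr rfl
    intro p _
    rw [integral_indicator_const (Ψ p) (cyl_measurable X hX n p)]
    rw [smul_eq_mul, mul_comm]
    rfl
  · intro p _
    exact (integrable_const (Ψ p)).indicator (cyl_measurable X hX n p)


noncomputable def psi (lam : ℝ) (f : Fin N → ℝ) (k : Fin N) (n : ℕ) (p : Fin (n+1) → Fin N) : ℝ :=
  lam⁻¹ ^ n *
    (if (∀ t : Fin (n+1), 1 ≤ t.val → p t ≠ k) then ∏ t : Fin n, f (p t.castSucc) else 0)

end PFAux

open PFAux MeasureTheory Finset Filter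

/-- **Corollary.**  With the notation of the theorem, taking `i = k`:
`u k = 1 / E_k[ ∑_{n<τ} lam⁻ⁿ ∏_{t<n} f (X t) ]`. -/
theorem perron_frobenius_eigenvector_return_time_formula
    {N : ℕ} (A : Matrix (Fin N) (Fin N) ℝ)
    (hA_nonneg : ∀ i j, 0 ≤ A i j)
    (hA_prim : ∃ m : ℕ, 0 < m ∧ ∀ i j, 0 < (A ^ m) i j)
    (lam : ℝ) (u : Fin N → ℝ)
    (hlam_pos : 0 < lam)
    (hu_pos : ∀ i, 0 < u i)
    (hu_sum : ∑ i, u i = 1)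
    (hu_eig : ∀ j, ∑ i, u i * A i j = lam * u j)
    (f : Fin N → ℝ) (hf : ∀ i, f i = ∑ j, A i j)
    (M : Matrix (Fin N) (Fin N) ℝ) (hM : ∀ i j, M i j = A i j / f i)
    (Ω : Type*) [MeasurableSpace Ω] (P : Measure Ω) [IsProbabilityMeasure P]
    (X : ℕ → Ω → Fin N) (hX_meas : ∀ n, Measurable (X n))
    (k : Fin N)
    (h_chain : ∀ (n : ℕ) (path : ℕ → Fin N),
      (P {ω | ∀ t ≤ n, X t ω = path t}).toReal =
        (if path 0 = k then 1 else 0) *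
          ∏ t ∈ Finset.range n, M (path t) (path (t + 1)))
    (τ : Ω → ℕ) (hτ : ∀ ω, τ ω = sInf {n : ℕ | 1 ≤ n ∧ X n ω = k})
    (hτ_fin : ∀ᵐ ω ∂P, ∃ n : ℕ, 1 ≤ n ∧ X n ω = k) :
    u k =
      1 / (∫ ω, ∑ n ∈ Finset.range (τ ω),
          lam⁻¹ ^ n * ∏ t ∈ Finset.range n, f (X t ω) ∂P) := by
  classical
  -- positivity of the row sums
  have hf_nonneg : ∀ i, 0 ≤ f i := by
    intro i; rw [hf]; exact Finset.sum_nonneg fun j _ => hA_nonneg i j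
  have hf_pos : ∀ i, 0 < f i := by
    intro i
    rcases (hf_nonneg i).lt_or_eq with h | h
    · exact h
    · exfalso
      obtain ⟨m₀, hm₀, hAm₀⟩ := hA_prim
      have hzero : ∀ j, A i j = 0 := by
        intro j
        have h' : ∑ j, A i j = 0 := by rw [← hf]; exact h.symm
        exact (Finset.sum_eq_zero_iff_of_nonneg (fun j _ => hA_nonneg i j)).mp h' j
          (Finset.mem_univ j)
      obtain ⟨m', rfl⟩ := Nat.exists_eq_succ_of_ne_zero hm₀.ne'
      have : (A ^ (m' + 1)) i i = 0 := by
        rw [pow_succ', Matrix.mul_apply]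
        exact Finset.sum_eq_zero fun l _ => by rw [hzero l, zero_mul]
      exact absurd this (hAm₀ i i).ne'
  set B := tab A k with hBdef
  have hBapp : ∀ i j, B i j = if j = k then 0 else A i j := fun i j => rfl
  -- integral of each piece
  have hΨnn : ∀ (n : ℕ) (p : Fin (n+1) → Fin N), 0 ≤ psi lam f k n p := by
    intro n p
    apply mul_nonneg (pow_nonneg (inv_nonneg.mpr hlam_pos.le) n)
    split
    · exact Finset.prod_nonneg fun t _ => hf_nonneg _
    · exact le_refl 0
  have hInt : ∀ n, Integrable (fun ω => psi lam f k n (fun t => X t.val ω)) P :=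
    fun n => integrable_cylinderFun P X hX_meas n (psi lam f k n)
  have hint : ∀ n, ∫ ω, psi lam f k n (fun t => X t.val ω) ∂P
      = lam⁻¹ ^ n * ∑ j, vecIter B (eVec k) n j := by
    intro n
    rw [integral_cylinderFun P X hX_meas n (psi lam f k n)]
    have hmeas : ∀ p : Fin (n+1) → Fin N,
        (P {ω' | ∀ t : Fin (n+1), X t.val ω' = p t}).toReal
          = (if p 0 = k then 1 else 0) * ∏ t : Fin n, M (p t.castSucc) (p t.succ) := by
      intro p
      set path : ℕ → Fin N :=
        fun t => if h : t ≤ n then p ⟨t, Nat.lt_succ_of_le h⟩ else p 0 with hpathdef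
      have hset : {ω | ∀ t ≤ n, X t ω = path t}
          = {ω' | ∀ t : Fin (n+1), X t.val ω' = p t} := by
        ext ω
        constructor
        · intro h t
          have h2 := h t.val (Nat.lt_succ_iff.mp t.isLt)
          rw [hpathdef] at h2
          simp only [dif_pos (Nat.lt_succ_iff.mp t.isLt)] at h2
          rwa [Fin.eta] at h2
        · intro h t ht
          rw [hpathdef]
          simp only [dif_pos ht]
          exact h ⟨t, Nat.lt_succ_of_le ht⟩
      rw [← hset, h_chain n path]
      refine congrArg₂ (· * ·) ?_ ?_
      · have : path 0 = p 0 := by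
          rw [hpathdef]
          simp only [dif_pos (Nat.zero_le n)]
          exact congrArg p (Fin.ext rfl)
        rw [this]
      · rw [← Fin.prod_univ_eq_prod_range (fun t => M (path t) (path (t+1))) n]
        apply Finset.prod_congr rfl
        intro t _
        have e1 : path t.val = p t.castSucc := by
          rw [hpathdef]
          simp only [dif_pos (le_of_lt t.isLt)]
          exact congrArg p (Fin.ext rfl)
        have e2 : path (t.val+1) = p t.succ := by
          rw [hpathdef]
          simp only [dif_pos (Nat.succ_le_of_lt t.isLt)]
          exact congrArg p (Fin.ext rfl)
        rw [e1, e2]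
    rw [Finset.sum_congr rfl (fun p (_ : p ∈ univ) => by rw [hmeas p])]
    have hper : ∀ p : Fin (n+1) → Fin N,
        psi lam f k n p * ((if p 0 = k then 1 else 0) * ∏ t : Fin n, M (p t.castSucc) (p t.succ))
          = lam⁻¹ ^ n * (eVec k (p 0) * ∏ t : Fin n, B (p t.castSucc) (p t.succ)) := by
      intro p
      by_cases hp0 : p 0 = k
      swap
      · simp [eVec, hp0]
      rw [if_pos hp0]
      have he : eVec k (p 0) = 1 := by rw [eVec, if_pos hp0]
      rw [he]
      by_cases hcond : ∀ t : Fin (n+1), 1 ≤ t.val → p t ≠ k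
      · have hprod : (∏ t : Fin n, f (p t.castSucc)) * ∏ t : Fin n, M (p t.castSucc) (p t.succ)
            = ∏ t : Fin n, B (p t.castSucc) (p t.succ) := by
          rw [← Finset.prod_mul_distrib]
          apply Finset.prod_congr rfl
          intro t _
          have hsucc : p t.succ ≠ k := hcond t.succ (by simp [Fin.val_succ])
          rw [hM, hBapp, if_neg hsucc]
          rw [mul_div_assoc']
          exact mul_div_cancel_left₀ _ (hf_pos _).ne'
        rw [psi, if_pos hcond]
        rw [← hprod]
        ring
      · rw [psi, if_neg hcond]
        push_neg at hcond
        obtain ⟨t₀, ht₀1, ht₀k⟩ := hcond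
        have hst : t₀.val - 1 < n := by omega
        set s : Fin n := ⟨t₀.val - 1, hst⟩ with hsdef
        have hss : s.succ = t₀ := by
          apply Fin.ext
          simp [hsdef, Fin.val_succ]
          omega
        have hB0 : B (p s.castSucc) (p s.succ) = 0 := by
          rw [hss, hBapp, if_pos ht₀k]
        rw [show (∏ t : Fin n, B (p t.castSucc) (p t.succ)) = 0 from
          Finset.prod_eq_zero (Finset.mem_univ s) hB0]
        ring
    rw [Finset.sum_congr rfl (fun p (_ : p ∈ univ) => hper p)]
    rw [← Finset.mul_sum]
    congr 1
    exact pathSum B n (eVec k)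
  -- the sum of the integrals
  have hHasSum : HasSum (fun n => ∫ ω, psi lam f k n (fun t => X t.val ω) ∂P) (1 / u k) := by
    have h1 := key_hasSum A hA_nonneg hA_prim lam u hlam_pos hu_pos hu_sum hu_eig k
    have h2 : (fun n => ∫ ω, psi lam f k n (fun t => X t.val ω) ∂P)
        = fun n => lam⁻¹ ^ n * ∑ j, vecIter (tab A k) (eVec k) n j := by
      funext n; rw [hint n]
    rw [h2]
    exact h1
  -- lintegral bound
  have hlint : ∀ n, (∫⁻ ω, ‖psi lam f k n (fun t => X t.val ω)‖₊ ∂P)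
      = ENNReal.ofReal (∫ ω, psi lam f k n (fun t => X t.val ω) ∂P) := by
    intro n
    rw [ofReal_integral_eq_lintegral_ofReal (hInt n) (ae_of_all _ fun ω => hΨnn n _)]
    apply lintegral_congr
    intro ω
    rw [← Real.enorm_eq_ofReal (hΨnn n _), enorm_eq_nnnorm]
  have hsum_ne_top : (∑' n, ∫⁻ ω, ‖psi lam f k n (fun t => X t.val ω)‖₊ ∂P) ≠ ⊤ := by
    rw [tsum_congr hlint]
    rw [← ENNReal.ofReal_tsum_of_nonneg
      (fun n => integral_nonneg fun ω => hΨnn n _) hHasSum.summable]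
    exact ENNReal.ofReal_ne_top
  have hitsum : ∫ ω, (∑' n, psi lam f k n (fun t => X t.val ω)) ∂P
      = ∑' n, ∫ ω, psi lam f k n (fun t => X t.val ω) ∂P :=
    integral_tsum (fun n => (hInt n).aestronglyMeasurable) hsum_ne_top
  -- a.e. identification of the integrand
  have hae : ∀ᵐ ω ∂P,
      (∑ n ∈ Finset.range (τ ω), lam⁻¹ ^ n * ∏ t ∈ Finset.range n, f (X t ω))
        = ∑' n, psi lam f k n (fun t => X t.val ω) := by
    filter_upwards [hτ_fin] with ω hω
    have hne : {n : ℕ | 1 ≤ n ∧ X n ω = k}.Nonempty := hω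
    have hτω : τ ω = sInf {n : ℕ | 1 ≤ n ∧ X n ω = k} := hτ ω
    have hmem := Nat.sInf_mem hne
    rw [← hτω] at hmem
    have hτpos : 1 ≤ τ ω := hmem.1
    have hform : ∀ n, psi lam f k n (fun t : Fin (n+1) => X t.val ω)
        = if n < τ ω then lam⁻¹ ^ n * ∏ t ∈ Finset.range n, f (X t ω) else 0 := by
      intro n
      by_cases h : n < τ ω
      · rw [if_pos h]
        have hcond : ∀ t : Fin (n+1), 1 ≤ t.val → X t.val ω ≠ k := by
          intro t ht hk
          have hlt : t.val < τ ω := lt_of_le_of_lt (Nat.lt_succ_iff.mp t.isLt) h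
          rw [hτω] at hlt
          exact Nat.notMem_of_lt_sInf hlt ⟨ht, hk⟩
        rw [psi, if_pos hcond]
        congr 1
        rw [← Fin.prod_univ_eq_prod_range (fun t => f (X t ω)) n]
        exact Finset.prod_congr rfl fun t _ => rfl
      · rw [if_neg h]
        push_neg at h
        have hcond : ¬ (∀ t : Fin (n+1), 1 ≤ t.val → X t.val ω ≠ k) := by
          intro hc
          exact hc ⟨τ ω, Nat.lt_succ_of_le h⟩ hτpos hmem.2
        rw [psi, if_neg hcond, mul_zero]
    have htsum : (∑' n, psi lam f k n (fun t => X t.val ω))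
        = ∑ n ∈ Finset.range (τ ω), psi lam f k n (fun t => X t.val ω) := by
      apply tsum_eq_sum
      intro n hn
      rw [hform n, if_neg (by simpa using hn)]
    rw [htsum]
    apply Finset.sum_congr rfl
    intro n hn
    rw [hform n, if_pos (Finset.mem_range.mp hn)]
  have hfinal : ∫ ω, (∑ n ∈ Finset.range (τ ω),
      lam⁻¹ ^ n * ∏ t ∈ Finset.range n, f (X t ω)) ∂P = 1 / u k := by
    rw [integral_congr_ae hae, hitsum, hHasSum.tsum_eq]
  rw [hfinal, one_div_one_div]
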